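/- Every finite-dimensional associative division algebra over ℝ is isomorphic (as an ℝ-algebra) to ℝ, ℂ, or the quaternions ℍ (Frobenius' theorem). -/

import Mathlib

set_option linter.unusedSectionVars false

open Polynomial

namespace Frob

variable {D : Type*} [DivisionRing D] [Algebra ℝ D] [FiniteDimensional ℝ D]

local notation "ρ" => algebraMap ℝ D

theorem quad (x : D) : ∃ a b : ℝ, x * x = ρ a * x + ρ b := by
  have hint : IsIntegral ℝ x := IsIntegral.of_finite ℝ x
  have hirr : Irreducible (minpoly ℝ x) := minpoly.irreducible hint
  have hmon : (minpoly ℝ x).Monic := minpoly.monic hint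
  have hdeg : 0 < ((minpoly ℝ x).map (algebraMap ℝ ℂ)).degree := by
    rw [Polynomial.degree_map]
    exact minpoly.degree_pos hint
  obtain ⟨z, hz⟩ := Complex.exists_root hdeg
  have haev : (Polynomial.aeval z) (minpoly ℝ x) = 0 := by
    rwa [Polynomial.aeval_def, ← Polynomial.eval_map]
  have hmp := minpoly.eq_of_irreducible_of_monic hirr haev hmon
  have h2 : (minpoly ℝ x).natDegree ≤ 2 := by
    rw [hmp]
    have := minpoly.natDegree_le (A := ℝ) (B := ℂ) z
    simpa [Complex.finrank_real_complex] using this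
  have h1 : 0 < (minpoly ℝ x).natDegree := minpoly.natDegree_pos hint
  interval_cases hn : (minpoly ℝ x).natDegree
  · -- degree 1 : x is real
    have hv := minpoly.aeval ℝ x
    rw [hmon.eq_X_add_C hn] at hv
    simp only [map_add, aeval_X, aeval_C] at hv
    have hx : ∃ r : ℝ, x = ρ r := by
      refine ⟨-(minpoly ℝ x).coeff 0, ?_⟩
      rw [map_neg]
      exact eq_neg_of_add_eq_zero_left hv
    obtain ⟨r, hr⟩ := hx
    refine ⟨2 * r, -(r ^ 2), ?_⟩
    rw [hr, ← map_mul, ← map_mul, ← map_add]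
    congr 1
    ring
  · -- degree 2
    have hs := (minpoly ℝ x).as_sum_range' 3 (by omega)
    have hv := minpoly.aeval ℝ x
    rw [hs] at hv
    have hc2 : (minpoly ℝ x).coeff 2 = 1 := by
      have := hmon.coeff_natDegree; rwa [hn] at this
    simp only [Finset.sum_range_succ, Finset.sum_range_zero, map_add, aeval_monomial, hc2, map_one,
      zero_add, pow_zero, mul_one, pow_one, one_mul] at hv
    refine ⟨-(minpoly ℝ x).coeff 1, -(minpoly ℝ x).coeff 0, ?_⟩
    have h' : x ^ 2 = -(ρ ((minpoly ℝ x).coeff 0) + ρ ((minpoly ℝ x).coeff 1) * x) :=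
      neg_eq_iff_eq_neg.mp (neg_eq_of_add_eq_zero_left hv)
    rw [map_neg, map_neg, ← pow_two, h', neg_add, neg_mul]
    exact add_comm _ _

theorem quad' (x : D) : ∃ a b : ℝ, x * x = a • x + b • (1 : D) := by
  obtain ⟨a, b, h⟩ := quad x
  exact ⟨a, b, by rw [h, Algebra.smul_def, Algebra.smul_def, mul_one]⟩

/-- purely imaginary elements -/
def IsIm (x : D) : Prop := ∃ r : ℝ, r ≤ 0 ∧ x * x = r • (1 : D)

theorem sqrt_cases {x : D} {c : ℝ} (hx : x * x = c • (1 : D)) (hc : 0 ≤ c) :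
    x = Real.sqrt c • (1 : D) ∨ x = -(Real.sqrt c • (1 : D)) := by
  have key : (x - Real.sqrt c • (1 : D)) * (x + Real.sqrt c • (1 : D)) = 0 := by
    have h2 : Real.sqrt c * Real.sqrt c = c := Real.mul_self_sqrt hc
    have expand : (x - Real.sqrt c • (1 : D)) * (x + Real.sqrt c • (1 : D))
        = x * x - (Real.sqrt c * Real.sqrt c) • (1 : D) := by
      simp only [sub_mul, mul_add, smul_mul_assoc, mul_smul_comm, smul_smul, one_mul, mul_one,
        smul_add, smul_sub]
      module
    rw [expand, hx, h2, ← sub_smul, sub_self, zero_smul]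
  rcases mul_eq_zero.mp key with h | h
  · left; rwa [sub_eq_zero] at h
  · right; rwa [add_eq_zero_iff_eq_neg] at h

theorem isIm_real {x : D} (hx : IsIm x) {r : ℝ} (h : x = r • (1 : D)) : x = 0 := by
  obtain ⟨c, hc, hxx⟩ := hx
  have h1 : (r * r) • (1 : D) = c • (1 : D) := by
    rw [← hxx, h]
    simp only [smul_mul_assoc, mul_smul_comm, smul_smul, one_mul, mul_one]
  have h2 : ((r * r) - c) • (1 : D) = 0 := by rw [sub_smul, h1, sub_self]
  have h3 : r * r = c := by
    rcases smul_eq_zero.mp h2 with h' | h'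
    · linarith [sub_eq_zero.mp (by exact h' : (r * r) - c = 0)]
    · exact absurd h' one_ne_zero
  have hr0 : r = 0 := by nlinarith
  rw [h, hr0, zero_smul]

theorem decomp (x : D) : ∃ (r : ℝ) (u : D), IsIm u ∧ x = r • (1 : D) + u := by
  obtain ⟨a, b, hab⟩ := quad' x
  set u := x - (a / 2) • (1 : D) with hu
  have huu : u * u = (a ^ 2 / 4 + b) • (1 : D) := by
    rw [hu]
    simp only [sub_mul, mul_sub, hab, smul_mul_assoc, mul_smul_comm, smul_smul, one_mul, mul_one]
    match_scalars <;> ring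
  by_cases hc : a ^ 2 / 4 + b ≤ 0
  · exact ⟨a / 2, u, ⟨_, hc, huu⟩, by rw [hu]; abel⟩
  · push_neg at hc
    rcases sqrt_cases huu hc.le with h | h
    · refine ⟨a / 2 + Real.sqrt (a ^ 2 / 4 + b), 0, ⟨0, le_refl 0, by simp⟩, ?_⟩
      rw [hu, sub_eq_iff_eq_add] at h
      rw [h]; module
    · refine ⟨a / 2 - Real.sqrt (a ^ 2 / 4 + b), 0, ⟨0, le_refl 0, by simp⟩, ?_⟩
      rw [hu, sub_eq_iff_eq_add] at h
      rw [h]; module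

theorem indep {u v : D} (hu : IsIm u) (hv : IsIm v) (hu0 : u ≠ 0)
    (hvu : ∀ t : ℝ, v ≠ t • u) {a b c : ℝ}
    (h : a • (1 : D) + b • u + c • v = 0) : a = 0 ∧ b = 0 ∧ c = 0 := by
  have hv0 : v ≠ 0 := fun h0 => hvu 0 (by rw [h0, zero_smul])
  have hureal : ∀ r : ℝ, u ≠ r • (1 : D) := fun r hr => hu0 (isIm_real hu hr)
  have hvreal : ∀ r : ℝ, v ≠ r • (1 : D) := fun r hr => hv0 (isIm_real hv hr)
  obtain ⟨ru, hru, huu⟩ := hu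
  obtain ⟨rv, hrv, hvv⟩ := hv
  have hc : c = 0 := by
    by_contra hc
    set α := -(c⁻¹ * a) with hα
    set β := -(c⁻¹ * b) with hβ
    have hv' : v = α • (1 : D) + β • u := by
      have h' : (c⁻¹ • (a • (1 : D) + b • u + c • v) : D) = 0 := by rw [h, smul_zero]
      rw [smul_add, smul_add, smul_smul, smul_smul, smul_smul, inv_mul_cancel₀ hc, one_smul] at h'
      have h'' := eq_neg_of_add_eq_zero_right h'
      rw [h'']; module
    have E : (α * α + β * β * ru) • (1 : D) + (2 * (α * β)) • u = rv • (1 : D) := by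
      rw [← hvv, hv']
      simp only [add_mul, mul_add, smul_mul_assoc, mul_smul_comm, smul_smul, one_mul, mul_one, huu]
      match_scalars <;> ring
    have hEq : (2 * (α * β)) • u = (rv - (α * α + β * β * ru)) • (1 : D) := by
      rw [sub_smul, ← E]; abel
    by_cases hβ0 : β = 0
    · exact hvreal α (by rw [hv', hβ0, zero_smul, add_zero])
    by_cases hα0 : α = 0
    · exact hvu β (by rw [hv', hα0, zero_smul, zero_add])
    have h2ab : (2 * (α * β)) ≠ 0 := mul_ne_zero two_ne_zero (mul_ne_zero hα0 hβ0)
    have hu' : u = ((2 * (α * β))⁻¹ * (rv - (α * α + β * β * ru))) • (1 : D) := by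
      rw [← smul_smul, ← hEq, smul_smul, inv_mul_cancel₀ h2ab, one_smul]
    exact hureal _ hu'
  rw [hc, zero_smul, add_zero] at h
  have hb : b = 0 := by
    by_contra hb
    have hu' : u = (-(b⁻¹ * a)) • (1 : D) := by
      have h' : (b⁻¹ • (a • (1 : D) + b • u) : D) = 0 := by rw [h, smul_zero]
      rw [smul_add, smul_smul, smul_smul, inv_mul_cancel₀ hb, one_smul] at h'
      have h'' := eq_neg_of_add_eq_zero_right h'
      rw [h'', neg_smul]
    exact hureal _ hu'
  rw [hb, zero_smul, add_zero] at h
  have ha : a = 0 := by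
    rcases smul_eq_zero.mp h with h' | h'
    · exact h'
    · exact absurd h' one_ne_zero
  exact ⟨ha, hb, hc⟩

theorem anticomm {u v : D} (hu : IsIm u) (hv : IsIm v) :
    ∃ t : ℝ, u * v + v * u = t • (1 : D) := by
  obtain ⟨ru, hru, huu⟩ := id hu
  obtain ⟨rv, hrv, hvv⟩ := id hv
  by_cases hu0 : u = 0
  · exact ⟨0, by rw [hu0, zero_mul, mul_zero, add_zero, zero_smul]⟩
  by_cases hvu : ∃ t : ℝ, v = t • u
  · obtain ⟨t, ht⟩ := hvu
    refine ⟨2 * (t * ru), ?_⟩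
    rw [ht, smul_mul_assoc, mul_smul_comm, huu, smul_smul]
    match_scalars <;> ring
  push_neg at hvu
  obtain ⟨p, q, hpq⟩ := quad' (u + v)
  obtain ⟨p', q', hpq'⟩ := quad' (u - v)
  have h1 : ru • (1 : D) + (u * v + v * u) + rv • (1 : D) =
      p • u + p • v + q • (1 : D) := by
    calc ru • (1 : D) + (u * v + v * u) + rv • (1 : D)
        = u * u + (u * v + v * u) + v * v := by rw [huu, hvv]
      _ = (u + v) * (u + v) := by noncomm_ring
      _ = p • (u + v) + q • (1 : D) := hpq
      _ = p • u + p • v + q • (1 : D) := by module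
  have h2 : ru • (1 : D) - (u * v + v * u) + rv • (1 : D) =
      p' • u - p' • v + q' • (1 : D) := by
    calc ru • (1 : D) - (u * v + v * u) + rv • (1 : D)
        = u * u - (u * v + v * u) + v * v := by rw [huu, hvv]
      _ = (u - v) * (u - v) := by noncomm_ring
      _ = p' • (u - v) + q' • (1 : D) := hpq'
      _ = p' • u - p' • v + q' • (1 : D) := by module
  have hZ : (q + q' - 2 * ru - 2 * rv) • (1 : D) + (p + p') • u + (p - p') • v = 0 := by
    linear_combination (norm := module) -h1 - h2
  obtain ⟨-, hb, hcc⟩ := indep ⟨ru, hru, huu⟩ ⟨rv, hrv, hvv⟩ hu0 hvu hZ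
  have hp : p = 0 := by linarith
  refine ⟨q - ru - rv, ?_⟩
  have hS : u * v + v * u = p • u + p • v + q • (1 : D) - ru • (1 : D) - rv • (1 : D) := by
    rw [← h1]; abel
  rw [hS, hp]
  match_scalars <;> ring

theorem normalize {u : D} (hu : IsIm u) (hu0 : u ≠ 0) :
    ∃ (i : D) (s : ℝ), 0 < s ∧ i = s • u ∧ i * i = -(1 : D) := by
  obtain ⟨r, hr, huu⟩ := hu
  have hrne : r ≠ 0 := by
    intro h0
    rw [h0, zero_smul] at huu
    rcases mul_eq_zero.mp huu with h' | h' <;> exact hu0 h'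
  have hrlt : r < 0 := lt_of_le_of_ne hr hrne
  have hsq : Real.sqrt (-r) * Real.sqrt (-r) = -r := Real.mul_self_sqrt (by linarith)
  have hsqpos : 0 < Real.sqrt (-r) := Real.sqrt_pos.mpr (by linarith)
  set s := (Real.sqrt (-r))⁻¹ with hs
  have hspos : 0 < s := inv_pos.mpr hsqpos
  refine ⟨s • u, s, hspos, rfl, ?_⟩
  rw [smul_mul_assoc, mul_smul_comm, huu, smul_smul, smul_smul]
  have hcoef : s * s * r = -1 := by
    rw [hs]
    field_simp
    nlinarith [hsq]
  rw [hcoef, neg_smul, one_smul]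

theorem main : Nonempty (D ≃ₐ[ℝ] ℝ) ∨ Nonempty (D ≃ₐ[ℝ] ℂ) ∨ Nonempty (D ≃ₐ[ℝ] Quaternion ℝ) := by
  by_cases hreal : ∀ x : D, ∃ r : ℝ, x = r • (1 : D)
  · left
    have hbij : Function.Bijective (Algebra.ofId ℝ D) := by
      constructor
      · exact (algebraMap ℝ D).injective
      · intro x
        obtain ⟨r, hr⟩ := hreal x
        exact ⟨r, by rw [Algebra.ofId_apply, hr, Algebra.algebraMap_eq_smul_one]⟩
    exact ⟨(AlgEquiv.ofBijective (Algebra.ofId ℝ D) hbij).symm⟩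
  push_neg at hreal
  obtain ⟨x₀, hx₀⟩ := hreal
  obtain ⟨r₀, u₀, hu₀, hx₀eq⟩ := decomp x₀
  have hu₀0 : u₀ ≠ 0 := fun h => hx₀ r₀ (by rw [hx₀eq, h, add_zero])
  obtain ⟨i, s, hspos, hieq, hi2⟩ := normalize hu₀ hu₀0
  have hiIm : IsIm i := ⟨-1, by norm_num, by rw [hi2, neg_smul, one_smul]⟩
  have hi0 : i ≠ 0 := by
    intro h
    rw [h, zero_mul] at hi2
    exact one_ne_zero (neg_eq_zero.mp hi2.symm)
  by_cases hC : ∀ y : D, IsIm y → ∃ t : ℝ, y = t • i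
  · right; left
    have hi2' : i * i = -1 := hi2
    let f : ℂ →ₐ[ℝ] D := Complex.liftAux i hi2'
    have hinj : Function.Injective f := f.toRingHom.injective
    have hsurj : Function.Surjective f := by
      intro z
      obtain ⟨r, u, hu, hz⟩ := decomp z
      obtain ⟨t, ht⟩ := hC u hu
      refine ⟨⟨r, t⟩, ?_⟩
      show Complex.liftAux i hi2' ⟨r, t⟩ = z
      rw [Complex.liftAux_apply, hz, ht, Algebra.algebraMap_eq_smul_one]
    exact ⟨(AlgEquiv.ofBijective f ⟨hinj, hsurj⟩).symm⟩
  right; right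
  push_neg at hC
  obtain ⟨v, hvIm, hvi⟩ := hC
  obtain ⟨rv, hrv, hvv⟩ := id hvIm
  obtain ⟨t0, ht0⟩ := anticomm hiIm hvIm
  set w := v + (t0 / 2) • i with hw
  have hww : w * w = (rv + t0 ^ 2 / 4) • (1 : D) := by
    rw [hw]
    simp only [add_mul, mul_add, smul_mul_assoc, mul_smul_comm, smul_smul, one_mul, mul_one,
      hvv, hi2]
    linear_combination (norm := module) (t0 / 2) • ht0
  have hw0 : w ≠ 0 := by
    intro h
    apply hvi (-(t0 / 2))
    rw [hw] at h
    have := eq_neg_of_add_eq_zero_left h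
    rw [this, neg_smul]
  have hwIm : IsIm w := by
    refine ⟨rv + t0 ^ 2 / 4, ?_, hww⟩
    by_contra hpos
    push_neg at hpos
    rcases sqrt_cases hww hpos.le with h | h
    · have h0 : (-(Real.sqrt (rv + t0 ^ 2 / 4))) • (1 : D) + (t0 / 2) • i + (1 : ℝ) • v = 0 := by
        rw [hw] at h
        linear_combination (norm := module) h
      obtain ⟨-, -, h1⟩ := indep hiIm hvIm hi0 hvi h0
      norm_num at h1
    · have h0 : (Real.sqrt (rv + t0 ^ 2 / 4)) • (1 : D) + (t0 / 2) • i + (1 : ℝ) • v = 0 := by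
        rw [hw] at h
        linear_combination (norm := module) h
      obtain ⟨-, -, h1⟩ := indep hiIm hvIm hi0 hvi h0
      norm_num at h1
  have hiw : i * w + w * i = 0 := by
    rw [hw]
    simp only [mul_add, add_mul, mul_smul_comm, smul_mul_assoc, hi2]
    linear_combination (norm := module) ht0
  obtain ⟨j, sw, hswpos, hjeq, hj2⟩ := normalize hwIm hw0
  have hjIm : IsIm j := ⟨-1, by norm_num, by rw [hj2, neg_smul, one_smul]⟩
  have hij : i * j + j * i = 0 := by
    rw [hjeq, mul_smul_comm, smul_mul_assoc, ← smul_add, hiw, smul_zero]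
  have hji : j * i = -(i * j) := eq_neg_of_add_eq_zero_right hij
  let qb : QuaternionAlgebra.Basis D (-1 : ℝ) (0 : ℝ) (-1 : ℝ) :=
    { i := i, j := j, k := i * j,
      i_mul_i := by rw [neg_smul, one_smul, zero_smul, add_zero]; exact hi2
      j_mul_j := by rw [neg_smul, one_smul]; exact hj2
      i_mul_j := rfl
      j_mul_i := by rw [zero_smul, zero_sub]; exact hji }
  set k := i * j with hk
  have hk2 : k * k = -(1 : D) := by
    have := qb.k_mul_k
    simp only [qb] at this
    rw [← hk] at this
    rw [this]
    norm_num
  have hkIm : IsIm k := ⟨-1, by norm_num, by rw [hk2, neg_smul, one_smul]⟩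
  have hik : i * k = -j := by
    have := qb.i_mul_k
    simp only [qb] at this
    rw [← hk] at this
    rw [this, neg_smul, one_smul, zero_smul, add_zero]
  have hki : k * i = j := by
    have := qb.k_mul_i
    simp only [qb] at this
    rw [← hk] at this
    rw [this, neg_neg, one_smul]
  have hjk : j * k = i := by
    have := qb.j_mul_k
    simp only [qb] at this
    rw [← hk] at this
    rw [this, zero_mul, zero_smul, zero_sub, neg_smul, neg_neg, one_smul]
  have hkj : k * j = -i := by
    have := qb.k_mul_j
    simp only [qb] at this
    rw [← hk] at this
    rw [this, neg_smul, one_smul]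
  have hk0 : k ≠ 0 := by
    intro h
    rw [h, zero_mul] at hk2
    exact one_ne_zero (neg_eq_zero.mp hk2.symm)
  let g : Quaternion ℝ →ₐ[ℝ] D := qb.liftHom
  have hinj : Function.Injective g := g.toRingHom.injective
  have hsurj : Function.Surjective g := by
    intro z
    obtain ⟨r, u, huIm, hz⟩ := decomp z
    obtain ⟨al, hal⟩ := anticomm huIm hiIm
    obtain ⟨be, hbe⟩ := anticomm huIm hjIm
    obtain ⟨ga, hga⟩ := anticomm huIm hkIm
    set u' := u + (al / 2) • i + (be / 2) • j + (ga / 2) • k with hu'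
    have hA : ∀ y : D, u' * y + y * u' =
        (u * y + y * u) + (al / 2) • (i * y + y * i) + (be / 2) • (j * y + y * j)
          + (ga / 2) • (k * y + y * k) := by
      intro y
      rw [hu']
      simp only [add_mul, mul_add, smul_mul_assoc, mul_smul_comm, smul_add]
      abel
    have hAi : u' * i + i * u' = 0 := by
      rw [hA i, hal, hi2, hji, hki, hik]
      module
    have hAj : u' * j + j * u' = 0 := by
      rw [hA j, hbe, hj2, hji, hkj, hjk]
      module
    have hAk : u' * k + k * u' = 0 := by
      rw [hA k, hga, hk2, hik, hki, hjk, hkj]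
      module
    have h1 : u' * i = -(i * u') := eq_neg_of_add_eq_zero_left hAi
    have h2 : u' * j = -(j * u') := eq_neg_of_add_eq_zero_left hAj
    have h3 : u' * k = -(k * u') := eq_neg_of_add_eq_zero_left hAk
    have hck : u' * k = k * u' := by
      calc u' * k = u' * (i * j) := by rw [hk]
        _ = (u' * i) * j := by rw [mul_assoc]
        _ = -(i * (u' * j)) := by rw [h1, neg_mul, mul_assoc]
        _ = i * (j * u') := by rw [h2, mul_neg, neg_neg]
        _ = (i * j) * u' := by rw [mul_assoc]
        _ = k * u' := by rw [← hk]
    have hzero : u' * k = 0 := by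
      have h4 : u' * k + u' * k = 0 := by
        nth_rewrite 1 [h3]
        nth_rewrite 1 [hck]
        exact neg_add_cancel _
      have h5 : (2 : ℝ) • (u' * k) = 0 := by rw [two_smul]; exact h4
      rcases smul_eq_zero.mp h5 with h' | h'
      · norm_num at h'
      · exact h'
    have hu'0 : u' = 0 := by
      rcases mul_eq_zero.mp hzero with h' | h'
      · exact h'
      · exact absurd h' hk0
    have hu_eq : u = -((al / 2) • i) - (be / 2) • j - (ga / 2) • k := by
      rw [hu'] at hu'0
      linear_combination (norm := module) hu'0
    refine ⟨⟨r, -(al / 2), -(be / 2), -(ga / 2)⟩, ?_⟩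
    show qb.liftHom ⟨r, -(al / 2), -(be / 2), -(ga / 2)⟩ = z
    show qb.lift _ = z
    show algebraMap ℝ D r + (-(al / 2)) • i + (-(be / 2)) • j + (-(ga / 2)) • (i * j) = z
    rw [← hk, hz, hu_eq, Algebra.algebraMap_eq_smul_one]
    module
  exact ⟨(AlgEquiv.ofBijective g ⟨hinj, hsurj⟩).symm⟩

end Frob

/-- Frobenius' theorem: every finite-dimensional associative unital
division algebra over `ℝ` (a nontrivial associative unital `ℝ`-algebra in which every
nonzero element is invertible) is isomorphic as an `ℝ`-algebra to `ℝ`, `ℂ`, or the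
quaternions `ℍ`. -/
theorem stmt10 {D : Type*} [Ring D] [Nontrivial D] [Algebra ℝ D] [FiniteDimensional ℝ D]
    (hdiv : ∀ x : D, x ≠ 0 → IsUnit x) :
    Nonempty (D ≃ₐ[ℝ] ℝ) ∨ Nonempty (D ≃ₐ[ℝ] ℂ) ∨ Nonempty (D ≃ₐ[ℝ] Quaternion ℝ) := by
  letI : DivisionRing D := DivisionRing.ofIsUnitOrEqZero (fun a => by
    by_cases h : a = 0
    · exact Or.inr h
    · exact Or.inl (hdiv a h))
  exact Frob.main
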